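/- Let μ be a compactly supported probability distribution on R^{d×d} whose support leaves a proper cone K invariant, and suppose E[A] is K-positive and ρ(E[A]) < 1. Then V(x) := ‖x‖_f, where f ∈ int K* is the left Perron eigenvector of E[A] giving ‖E[A]‖_f = ρ(E[A]), satisfies E[V(Ax)] ≤ ρ(E[A]) V(x) for all x ∈ R^d; i.e., V is a homogeneous Lyapunov function of degree 1 for the first-mean dynamics. -/

import Mathlib

open Matrix Set

/-- A proper cone: a nonempty-interior, closed, convex, pointed set closed under
nonnegative scalar multiplication. -/
def IsProperCone {d : ℕ} (K : Set (Fin d → ℝ)) : Prop :=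
  (∀ x ∈ K, ∀ c : ℝ, 0 ≤ c → c • x ∈ K) ∧ IsClosed K ∧ Convex ℝ K ∧
    (interior K).Nonempty ∧ ∀ x ∈ K, -x ∈ K → x = 0

/-- `M` leaves the cone `K` invariant: `M K ⊆ K`. -/
def LeavesInvariant {d : ℕ} (M : Matrix (Fin d) (Fin d) ℝ) (K : Set (Fin d → ℝ)) : Prop :=
  ∀ x ∈ K, M.mulVec x ∈ K

/-- `M` is `K`-positive: `M (K \ {0}) ⊆ interior K`. -/
def IsKPos {d : ℕ} (M : Matrix (Fin d) (Fin d) ℝ) (K : Set (Fin d → ℝ)) : Prop :=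
  ∀ x ∈ K, x ≠ 0 → M.mulVec x ∈ interior K

/-- The dual cone `K* = {f | fᵀ x ≥ 0 for all x ∈ K}`. -/
def dualConeSet {d : ℕ} (K : Set (Fin d → ℝ)) : Set (Fin d → ℝ) :=
  {f | ∀ x ∈ K, 0 ≤ f ⬝ᵥ x}

/-- The spectral radius of a real matrix: the supremum of the absolute values of its
(complex) eigenvalues. -/
noncomputable def specRad {d : ℕ} (M : Matrix (Fin d) (Fin d) ℝ) : ℝ :=
  sSup {r | ∃ z : ℂ, Module.End.HasEigenvalue (Matrix.toLin' (M.map Complex.ofReal)) z ∧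
    r = ‖z‖}

/-- `nrm` is a norm on `Fin d → ℝ`. -/
def IsVecNorm {d : ℕ} (nrm : (Fin d → ℝ) → ℝ) : Prop :=
  (∀ x, 0 ≤ nrm x) ∧ (∀ x, nrm x = 0 ↔ x = 0) ∧
    (∀ (c : ℝ) x, nrm (c • x) = |c| * nrm x) ∧ ∀ x y, nrm (x + y) ≤ nrm x + nrm y

/-- `nrm` is cone absolute with respect to `K`. -/
def IsConeAbsolute {d : ℕ} (K : Set (Fin d → ℝ)) (nrm : (Fin d → ℝ) → ℝ) : Prop :=
  ∀ x, nrm x = sInf {r | ∃ v ∈ K, ∃ w ∈ K, x = v - w ∧ r = nrm (v + w)}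

/-- `nrm` is cone linear with respect to `K`. -/
def IsConeLinear {d : ℕ} (K : Set (Fin d → ℝ)) (nrm : (Fin d → ℝ) → ℝ) : Prop :=
  ∃ f ∈ dualConeSet K, ∀ x ∈ K, nrm x = f ⬝ᵥ x

/-- A cone linear absolute norm with respect to `K`. -/
def IsCLANorm {d : ℕ} (K : Set (Fin d → ℝ)) (nrm : (Fin d → ℝ) → ℝ) : Prop :=
  IsVecNorm nrm ∧ IsConeAbsolute K nrm ∧ IsConeLinear K nrm

/-- The operator norm of a matrix induced by the vector norm `nrm`. -/
noncomputable def opNorm {d : ℕ} (nrm : (Fin d → ℝ) → ℝ) (M : Matrix (Fin d) (Fin d) ℝ) : ℝ :=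
  sSup {r | ∃ x : Fin d → ℝ, x ≠ 0 ∧ r = nrm (M.mulVec x) / nrm x}

/-- The cone linear absolute norm `‖·‖_f` induced by `f ∈ int K*`. -/
noncomputable def coneNorm {d : ℕ} (K : Set (Fin d → ℝ)) (f : Fin d → ℝ)
    (x : Fin d → ℝ) : ℝ :=
  sInf {r | ∃ v ∈ K, ∃ w ∈ K, x = v - w ∧ r = f ⬝ᵥ (v + w)}

open MeasureTheory Filter

instance matMeasurableSpace {d : ℕ} : MeasurableSpace (Matrix (Fin d) (Fin d) ℝ) :=
  inferInstanceAs (MeasurableSpace (Fin d → Fin d → ℝ))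

/-- The (topological) support of a measure on matrices. -/
def msupport {d : ℕ} (μ : Measure (Matrix (Fin d) (Fin d) ℝ)) :
    Set (Matrix (Fin d) (Fin d) ℝ) :=
  {A | ∀ U : Set (Matrix (Fin d) (Fin d) ℝ), IsOpen U → A ∈ U → μ U ≠ 0}

/-- `nrm` is a norm on `d × d` real matrices. -/
def IsMatNorm {d : ℕ} (nrm : Matrix (Fin d) (Fin d) ℝ → ℝ) : Prop :=
  (∀ M, 0 ≤ nrm M) ∧ (∀ M, nrm M = 0 ↔ M = 0) ∧
    (∀ (c : ℝ) M, nrm (c • M) = |c| * nrm M) ∧ ∀ M N, nrm (M + N) ≤ nrm M + nrm N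

/-- `E[‖A_k ⋯ A_1‖^p]` for `A_1, …, A_k` i.i.d. with law `μ`. -/
noncomputable def prodSeq {d : ℕ} (μ : Measure (Matrix (Fin d) (Fin d) ℝ))
    (nrm : Matrix (Fin d) (Fin d) ℝ → ℝ) (p : ℝ) (k : ℕ) : ℝ :=
  ∫ A : Fin k → Matrix (Fin d) (Fin d) ℝ,
    nrm ((List.ofFn A).reverse.prod) ^ p ∂(Measure.pi fun _ => μ)

/-- The `L^p`-norm joint spectral radius (`p`-radius)
`ρ_{p,μ} = lim_{k→∞} (E[‖A_k ⋯ A_1‖^p])^{1/(pk)}` (as a `limsup`). -/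
noncomputable def pRad {d : ℕ} (μ : Measure (Matrix (Fin d) (Fin d) ℝ))
    (nrm : Matrix (Fin d) (Fin d) ℝ → ℝ) (p : ℝ) : ℝ :=
  limsup (fun k : ℕ => prodSeq μ nrm p k ^ (1 / (p * k))) atTop

/-- The joint spectral radius
`ρ̂(M) = limsup_{k→∞} sup_{A_1,…,A_k ∈ M} ‖A_k ⋯ A_1‖^{1/k}`. -/
noncomputable def jsr {d : ℕ} (Mset : Set (Matrix (Fin d) (Fin d) ℝ))
    (nrm : Matrix (Fin d) (Fin d) ℝ → ℝ) : ℝ :=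
  limsup (fun k : ℕ => sSup {r | ∃ A : Fin k → Matrix (Fin d) (Fin d) ℝ,
    (∀ i, A i ∈ Mset) ∧ r = nrm ((List.ofFn A).reverse.prod) ^ ((1 : ℝ) / k)}) atTop

/-- The entrywise mean matrix `E[A]` of `μ`. -/
noncomputable def meanMat {d : ℕ} (μ : Measure (Matrix (Fin d) (Fin d) ℝ)) :
    Matrix (Fin d) (Fin d) ℝ :=
  Matrix.of fun i j => ∫ X, X i j ∂μ

open Pointwise MeasureTheory Filter in
section
end

open Pointwise

namespace Stmt16

variable {d : ℕ} {K : Set (Fin d → ℝ)}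

lemma cont_dot_left (x : Fin d → ℝ) : Continuous fun f : Fin d → ℝ => f ⬝ᵥ x := by
  unfold dotProduct
  exact continuous_finset_sum _ fun i _ => (continuous_apply i).mul continuous_const

lemma cont_dot_right (f : Fin d → ℝ) : Continuous fun x : Fin d → ℝ => f ⬝ᵥ x := by
  unfold dotProduct
  exact continuous_finset_sum _ fun i _ => continuous_const.mul (continuous_apply i)

lemma isClosed_dual : IsClosed (dualConeSet K) := by
  have : dualConeSet K = ⋂ x ∈ K, {f : Fin d → ℝ | 0 ≤ f ⬝ᵥ x} := by
    ext f; simp [dualConeSet]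
  rw [this]
  exact isClosed_biInter fun x _ => isClosed_le continuous_const (cont_dot_left x)

lemma zero_mem_of_proper (hK : IsProperCone K) : (0 : Fin d → ℝ) ∈ K := by
  obtain ⟨e, he⟩ := hK.2.2.2.1
  have heK : e ∈ K := interior_subset he
  simpa using hK.1 e heK 0 le_rfl

lemma add_mem_of_proper (hK : IsProperCone K) {v w : Fin d → ℝ} (hv : v ∈ K) (hw : w ∈ K) :
    v + w ∈ K := by
  have h := hK.2.2.1 hv hw (by norm_num : (0:ℝ) ≤ 1/2) (by norm_num : (0:ℝ) ≤ 1/2) (by norm_num)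
  have := hK.1 _ h 2 (by norm_num)
  convert this using 1
  simp [smul_add, smul_smul]

lemma smul_mem_dual {f : Fin d → ℝ} (hf : f ∈ dualConeSet K) {c : ℝ} (hc : 0 ≤ c) :
    c • f ∈ dualConeSet K := by
  intro x hx
  have := hf x hx
  rw [smul_dotProduct]
  exact mul_nonneg hc this

/-- a nonzero dual vector is strictly positive on interior points -/
lemma dual_pos_on_interior {f : Fin d → ℝ} (hf : f ∈ dualConeSet K) (hf0 : f ≠ 0)
    {y : Fin d → ℝ} (hy : y ∈ interior K) : 0 < f ⬝ᵥ y := by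
  -- choose z with f ⬝ᵥ z > 0
  obtain ⟨i, hi⟩ : ∃ i, f i ≠ 0 := by
    by_contra h
    push_neg at h
    exact hf0 (funext h)
  obtain ⟨z, hz⟩ : ∃ z : Fin d → ℝ, 0 < f ⬝ᵥ z := by
    rcases lt_or_gt_of_ne hi with h | h
    · exact ⟨-Pi.single i 1, by simp [dotProduct_single]; linarith⟩
    · exact ⟨Pi.single i 1, by simp [dotProduct_single]; linarith⟩
  obtain ⟨ε, hε, hball⟩ := Metric.mem_nhds_iff.1 (mem_interior_iff_mem_nhds.1 hy)
  set c := ε / (2 * (‖z‖ + 1)) with hc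
  have hz1 : (0:ℝ) < ‖z‖ + 1 := by positivity
  have hcpos : 0 < c := by positivity
  have hmem : y - c • z ∈ K := by
    apply hball
    simp only [Metric.mem_ball, dist_eq_norm]
    have : ‖y - c • z - y‖ = c * ‖z‖ := by
      rw [show y - c • z - y = -(c • z) by abel, norm_neg, norm_smul, Real.norm_eq_abs,
        abs_of_pos hcpos]
    rw [this, hc]
    calc ε / (2 * (‖z‖ + 1)) * ‖z‖ < ε / (2 * (‖z‖ + 1)) * (2 * (‖z‖+1)) := by
          apply mul_lt_mul_of_pos_left _ (by positivity)
          nlinarith [norm_nonneg z]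
      _ = ε := by field_simp
  have h0 := hf _ hmem
  rw [dotProduct_sub, dotProduct_smul] at h0
  have : 0 < c * (f ⬝ᵥ z) := by positivity
  simp only [smul_eq_mul] at h0
  linarith

end Stmt16

namespace Stmt16

variable {d : ℕ} {K : Set (Fin d → ℝ)}

lemma abs_dot_le (h x : Fin d → ℝ) : |h ⬝ᵥ x| ≤ (d:ℝ) * ‖h‖ * ‖x‖ := by
  unfold dotProduct
  calc |∑ i, h i * x i| ≤ ∑ i, |h i * x i| := Finset.abs_sum_le_sum_abs _ _
    _ ≤ ∑ _i : Fin d, ‖h‖ * ‖x‖ := by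
        apply Finset.sum_le_sum
        intro i _
        rw [abs_mul]
        have h1 : |h i| ≤ ‖h‖ := by
          simpa [Real.norm_eq_abs] using norm_le_pi_norm h i
        have h2 : |x i| ≤ ‖x‖ := by
          simpa [Real.norm_eq_abs] using norm_le_pi_norm x i
        exact mul_le_mul h1 h2 (abs_nonneg _) (norm_nonneg _)
    _ = (d:ℝ) * ‖h‖ * ‖x‖ := by simp [Finset.sum_const, mul_assoc]

lemma norm_le_sum_abs (x : Fin d → ℝ) : ‖x‖ ≤ ∑ i, |x i| := by
  rcases Nat.eq_zero_or_pos d with hd | hd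
  · subst hd
    simp [norm_eq_zero.2 (Subsingleton.elim x 0)]
  · apply pi_norm_le_iff_of_nonneg (Finset.sum_nonneg fun i _ => abs_nonneg _) |>.2
    intro i
    simpa [Real.norm_eq_abs] using Finset.single_le_sum (f := fun j => |x j|)
      (fun j _ => abs_nonneg _) (Finset.mem_univ i)

/-- strict positivity on `K \ {0}` implies interior membership in the dual cone -/
lemma mem_interior_dual (hK : IsProperCone K) {g : Fin d → ℝ}
    (hg : ∀ x ∈ K, x ≠ 0 → 0 < g ⬝ᵥ x) : g ∈ interior (dualConeSet K) := by
  by_cases htriv : ∀ x ∈ K, x = 0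
  · have : dualConeSet K = univ := by
      ext f
      simp only [dualConeSet, mem_setOf_eq, mem_univ, iff_true]
      intro x hx
      rw [htriv x hx]
      simp
    rw [this, interior_univ]; trivial
  push_neg at htriv
  obtain ⟨x₀, hx₀K, hx₀⟩ := htriv
  -- the unit "sphere" of K is compact and nonempty
  set S : Set (Fin d → ℝ) := {x | x ∈ K ∧ ‖x‖ = 1} with hS
  have hScl : IsClosed S := hK.2.1.inter (isClosed_eq continuous_norm continuous_const)
  have hScpt : IsCompact S := by
    apply (isCompact_closedBall (0 : Fin d → ℝ) 1).of_isClosed_subset hScl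
    intro x hx
    simp [Metric.mem_closedBall, dist_eq_norm, hx.2]
  have hSne : S.Nonempty := by
    refine ⟨‖x₀‖⁻¹ • x₀, hK.1 _ hx₀K _ (by positivity), ?_⟩
    rw [norm_smul, Real.norm_eq_abs, abs_inv, abs_of_pos (norm_pos_iff.2 hx₀)]
    field_simp [norm_pos_iff.2 hx₀, ne_of_gt (norm_pos_iff.2 hx₀)]
  obtain ⟨xm, hxmS, hxm⟩ := hScpt.exists_isMinOn hSne (cont_dot_right g).continuousOn
  set m := g ⬝ᵥ xm with hm
  have hmpos : 0 < m := hg xm hxmS.1 (by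
    intro h
    rw [h] at hxmS
    have := hxmS.2
    simp at this)
  apply mem_interior.2
  refine ⟨Metric.ball g (m / ((d:ℝ) + 1)), ?_, Metric.isOpen_ball,
    Metric.mem_ball_self (by positivity)⟩
  intro h hh x hx
  rcases eq_or_ne x 0 with rfl | hx0
  · simp
  have hxu : ‖x‖⁻¹ • x ∈ S := by
    refine ⟨hK.1 _ hx _ (by positivity), ?_⟩
    rw [norm_smul, Real.norm_eq_abs, abs_inv, abs_of_pos (norm_pos_iff.2 hx0)]
    field_simp [ne_of_gt (norm_pos_iff.2 hx0)]
  have h1 : m ≤ g ⬝ᵥ (‖x‖⁻¹ • x) := hxm hxu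
  have h2 : |(h - g) ⬝ᵥ (‖x‖⁻¹ • x)| ≤ (d:ℝ) * ‖h - g‖ * 1 := by
    have := abs_dot_le (h - g) (‖x‖⁻¹ • x)
    rwa [hxu.2] at this
  have hdist : ‖h - g‖ < m / ((d:ℝ)+1) := by
    rw [← dist_eq_norm]
    exact Metric.mem_ball.1 hh
  have h3 : 0 ≤ h ⬝ᵥ (‖x‖⁻¹ • x) := by
    have hsplit : h ⬝ᵥ (‖x‖⁻¹ • x) = g ⬝ᵥ (‖x‖⁻¹ • x) + (h - g) ⬝ᵥ (‖x‖⁻¹ • x) := by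
      rw [sub_dotProduct]; ring
    rw [hsplit]
    have hd1 : (d:ℝ) * ‖h - g‖ ≤ (d:ℝ) * (m / ((d:ℝ)+1)) :=
      mul_le_mul_of_nonneg_left hdist.le (Nat.cast_nonneg d)
    have hd2 : (d:ℝ) * (m / ((d:ℝ)+1)) < m := by
      rw [div_eq_inv_mul, ← mul_assoc]
      have : (d:ℝ) * ((d:ℝ)+1)⁻¹ < 1 := by
        rw [mul_inv_lt_iff₀ (by positivity)]
        linarith
      nlinarith
    have := abs_le.1 h2
    linarith
  have : 0 ≤ ‖x‖⁻¹ * (h ⬝ᵥ x) := by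
    rwa [dotProduct_smul, smul_eq_mul] at h3
  have hnx : 0 < ‖x‖⁻¹ := inv_pos.2 (norm_pos_iff.2 hx0)
  nlinarith

/-- interior dual vectors are uniformly positive on K -/
lemma interior_dual_lower {f : Fin d → ℝ} (hf : f ∈ interior (dualConeSet K)) :
    ∃ ρ : ℝ, 0 < ρ ∧ ∀ v ∈ K, ρ * (∑ i, |v i|) ≤ f ⬝ᵥ v := by
  obtain ⟨ε, hε, hball⟩ := Metric.mem_nhds_iff.1 (mem_interior_iff_mem_nhds.1 hf)
  refine ⟨ε/2, by positivity, ?_⟩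
  intro v hv
  set g : Fin d → ℝ := fun i => f i - (ε/2) * (if 0 ≤ v i then 1 else -1) with hgdef
  have hgC : g ∈ dualConeSet K := by
    apply hball
    simp only [Metric.mem_ball, dist_eq_norm]
    rcases Nat.eq_zero_or_pos d with hd | hd
    · subst hd
      rw [Subsingleton.elim (g - f) 0, norm_zero]; exact hε
    have : ‖g - f‖ ≤ ε/2 := by
      apply pi_norm_le_iff_of_nonneg (by positivity) |>.2
      intro i
      simp only [hgdef, Pi.sub_apply, Real.norm_eq_abs]
      have : f i - ε / 2 * (if 0 ≤ v i then 1 else -1) - f i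
          = -(ε / 2 * (if 0 ≤ v i then 1 else -1)) := by ring
      rw [this, abs_neg, abs_mul, abs_of_pos (by positivity : (0:ℝ) < ε/2)]
      split <;> simp
    linarith
  have h0 := hgC v hv
  have hexp : g ⬝ᵥ v = f ⬝ᵥ v - (ε/2) * ∑ i, |v i| := by
    unfold dotProduct
    rw [Finset.mul_sum, ← Finset.sum_sub_distrib]
    congr 1
    ext i
    simp only [hgdef]
    rcases le_or_gt 0 (v i) with h | h
    · rw [if_pos h, abs_of_nonneg h]; ring
    · rw [if_neg (not_le.2 h), abs_of_neg h]; ring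
  rw [hexp] at h0
  linarith

end Stmt16

namespace Stmt16

variable {d : ℕ} {K : Set (Fin d → ℝ)} {M : Matrix (Fin d) (Fin d) ℝ}

lemma dot_transpose (M : Matrix (Fin d) (Fin d) ℝ) (f x : Fin d → ℝ) :
    M.transpose.mulVec f ⬝ᵥ x = f ⬝ᵥ M.mulVec x := by
  rw [Matrix.mulVec_transpose, ← Matrix.dotProduct_mulVec]

lemma cont_T (M : Matrix (Fin d) (Fin d) ℝ) : Continuous fun f : Fin d → ℝ => M.mulVec f := by
  apply continuous_pi
  intro i
  unfold Matrix.mulVec dotProduct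
  exact continuous_finset_sum _ fun j _ => continuous_const.mul (continuous_apply j)

lemma maps_K (hK : IsProperCone K) (hpos : IsKPos M K) : ∀ x ∈ K, M.mulVec x ∈ K := by
  intro x hx
  rcases eq_or_ne x 0 with rfl | hx0
  · simpa [Matrix.mulVec_zero] using zero_mem_of_proper hK
  · exact interior_subset (hpos x hx hx0)

lemma T_mem_dual (hK : IsProperCone K) (hpos : IsKPos M K) {f : Fin d → ℝ}
    (hf : f ∈ dualConeSet K) : M.transpose.mulVec f ∈ dualConeSet K := by
  intro x hx
  rw [dot_transpose]
  exact hf _ (maps_K hK hpos x hx)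

lemma T_dual_pos (hK : IsProperCone K) (hpos : IsKPos M K) {f : Fin d → ℝ}
    (hf : f ∈ dualConeSet K) (hf0 : f ≠ 0) :
    M.transpose.mulVec f ∈ interior (dualConeSet K) := by
  apply mem_interior_dual hK
  intro x hx hx0
  rw [dot_transpose]
  exact dual_pos_on_interior hf hf0 (hpos x hx hx0)

lemma interior_ne_zero (hK : IsProperCone K) (hd : 0 < d) {e : Fin d → ℝ}
    (he : e ∈ interior K) : e ≠ 0 := by
  intro h
  subst h
  obtain ⟨ε, hε, hball⟩ := Metric.mem_nhds_iff.1 (mem_interior_iff_mem_nhds.1 he)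
  set z : Fin d → ℝ := fun _ => ε/2 with hz
  have hnz : ∀ y : Fin d → ℝ, (∀ i, |y i| = ε/2) → y ∈ K := by
    intro y hy
    apply hball
    simp only [Metric.mem_ball, dist_eq_norm, sub_zero]
    have : ‖y‖ ≤ ε/2 := by
      apply pi_norm_le_iff_of_nonneg (by positivity) |>.2
      intro i
      rw [Real.norm_eq_abs, hy i]
    linarith
  have h1 : z ∈ K := hnz z fun i => by simp [hz, abs_of_pos (by positivity : (0:ℝ) < ε/2)]
  have h2 : -z ∈ K := hnz (-z) fun i => by
    simp [hz, abs_of_pos (by positivity : (0:ℝ) < ε/2)]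
  have := hK.2.2.2.2 z h1 h2
  have hz0 := congrFun this ⟨0, hd⟩
  simp [hz] at hz0
  linarith

lemma dual_nontrivial (hK : IsProperCone K) (hd : 0 < d) :
    ∃ h : Fin d → ℝ, h ∈ dualConeSet K ∧ h ≠ 0 := by
  have hKne : K ≠ univ := by
    intro h
    set y : Fin d → ℝ := fun _ => 1 with hy
    have h1 : y ∈ K := h ▸ mem_univ _
    have h2 : -y ∈ K := h ▸ mem_univ _
    have := congrFun (hK.2.2.2.2 y h1 h2) ⟨0, hd⟩
    simp [hy] at this
  obtain ⟨x₀, hx₀⟩ : ∃ x₀, x₀ ∉ K := by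
    by_contra h
    push_neg at h
    exact hKne (eq_univ_of_forall h)
  obtain ⟨f, u, hfu, hux⟩ := geometric_hahn_banach_closed_point hK.2.2.1 hK.2.1 hx₀
  have hu0 : 0 < u := by simpa using hfu 0 (zero_mem_of_proper hK)
  have hfle : ∀ a ∈ K, f a ≤ 0 := by
    intro a ha
    by_contra h
    push_neg at h
    obtain ⟨t, ht, htu⟩ : ∃ t : ℝ, 0 ≤ t ∧ u < t * f a := by
      refine ⟨(u+1)/f a, by positivity, ?_⟩
      rw [div_mul_cancel₀ _ (ne_of_gt h)]
      linarith
    have := hfu _ (hK.1 a ha t ht)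
    rw [f.map_smul, smul_eq_mul] at this
    linarith
  set hv : Fin d → ℝ := fun i => -f ((Pi.single i (1:ℝ) : Fin d → ℝ)) with hhv
  have hdot : ∀ x : Fin d → ℝ, hv ⬝ᵥ x = -f x := by
    intro x
    have hx : x = ∑ i, x i • (Pi.single i (1:ℝ) : Fin d → ℝ) := by
      ext j
      simp [Finset.sum_apply, Pi.single_apply]
    calc hv ⬝ᵥ x = ∑ i, (-f (Pi.single i 1)) * x i := rfl
      _ = -f x := by
          conv_rhs => rw [hx]
          rw [map_sum]
          simp [mul_comm]
  refine ⟨hv, ?_, ?_⟩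
  · intro x hx
    rw [hdot]
    have := hfle x hx
    linarith
  · intro h
    have := hdot x₀
    rw [h] at this
    simp only [zero_dotProduct] at this
    have hx0 : 0 < f x₀ := lt_trans hu0 hux
    linarith

lemma smul_interior_dual {c : ℝ} (hc : 0 < c) {y : Fin d → ℝ}
    (hy : y ∈ interior (dualConeSet K)) : c • y ∈ interior (dualConeSet K) := by
  have hCC : c • dualConeSet K = dualConeSet K := by
    apply subset_antisymm
    · rintro _ ⟨x, hx, rfl⟩
      exact smul_mem_dual hx hc.le
    · intro x hx
      exact ⟨c⁻¹ • x, smul_mem_dual hx (by positivity), by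
        simp [smul_smul, mul_inv_cancel₀ hc.ne']⟩
  have : c • y ∈ c • interior (dualConeSet K) := smul_mem_smul_set hy
  rwa [← interior_smul₀ hc.ne', hCC] at this

end Stmt16

namespace Stmt16

variable {d : ℕ} {K : Set (Fin d → ℝ)} {M : Matrix (Fin d) (Fin d) ℝ}

theorem perron (hK : IsProperCone K) (hd : 0 < d) (hpos : IsKPos M K) :
    ∃ lam : ℝ, 0 < lam ∧ ∃ f : Fin d → ℝ, f ∈ interior (dualConeSet K) ∧ f ≠ 0 ∧
      M.transpose.mulVec f = lam • f := by
  classical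
  set C := dualConeSet K with hC
  set T : (Fin d → ℝ) → (Fin d → ℝ) := fun f => M.transpose.mulVec f with hT
  have hTcont : Continuous T := cont_T _
  obtain ⟨e, he⟩ := hK.2.2.2.1
  have heK : e ∈ K := interior_subset he
  have he0 : e ≠ 0 := interior_ne_zero hK hd he
  -- the unit sphere of C
  set S : Set (Fin d → ℝ) := {f | f ∈ C ∧ ‖f‖ = 1} with hS
  have hCcl : IsClosed C := isClosed_dual
  have hScl : IsClosed S := hCcl.inter (isClosed_eq continuous_norm continuous_const)
  have hScpt : IsCompact S := by
    apply (isCompact_closedBall (0 : Fin d → ℝ) 1).of_isClosed_subset hScl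
    intro x hx
    simp [Metric.mem_closedBall, dist_eq_norm, hx.2]
  obtain ⟨h₀, hh₀C, hh₀0⟩ := dual_nontrivial hK hd
  have hSne : S.Nonempty := by
    refine ⟨‖h₀‖⁻¹ • h₀, smul_mem_dual hh₀C (by positivity), ?_⟩
    rw [norm_smul, Real.norm_eq_abs, abs_inv, abs_of_pos (norm_pos_iff.2 hh₀0)]
    field_simp [ne_of_gt (norm_pos_iff.2 hh₀0)]
  have hSnz : ∀ f ∈ S, f ≠ 0 := by
    intro f hf h
    rw [h] at hf
    have h2 := hf.2
    simp at h2
  -- uniform positivity of pairing with e on S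
  obtain ⟨fm, hfmS, hfm⟩ := hScpt.exists_isMinOn hSne (cont_dot_left e).continuousOn
  set m₀ := fm ⬝ᵥ e with hm₀
  have hm₀pos : 0 < m₀ := dual_pos_on_interior hfmS.1 (hSnz fm hfmS) he
  -- uniform bound on T on S
  obtain ⟨Ct, hCt⟩ := hScpt.exists_bound_of_continuousOn hTcont.continuousOn
  set B := (d : ℝ) * (max Ct 0) * ‖e‖ with hB
  have hBnn : 0 ≤ B := by positivity
  have hTbound : ∀ f ∈ S, T f ⬝ᵥ e ≤ B := by
    intro f hf
    have h1 := abs_dot_le (T f) e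
    have h2 : ‖T f‖ ≤ max Ct 0 := le_trans (hCt f hf) (le_max_left _ _)
    have h3 : (d:ℝ) * ‖T f‖ * ‖e‖ ≤ B := by
      apply mul_le_mul_of_nonneg_right _ (norm_nonneg _)
      exact mul_le_mul_of_nonneg_left h2 (Nat.cast_nonneg d)
    have := (abs_le.1 h1).2
    linarith
  -- the feasible set
  set Ehat : Set (ℝ × (Fin d → ℝ)) :=
    {p | 0 ≤ p.1 ∧ p.2 ∈ C ∧ ‖p.2‖ = 1 ∧ T p.2 - p.1 • p.2 ∈ C} with hEhat
  have hEhatcl : IsClosed Ehat := by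
    apply IsClosed.inter (isClosed_le continuous_const continuous_fst)
    apply IsClosed.inter (hCcl.preimage continuous_snd)
    apply IsClosed.inter (isClosed_eq (continuous_norm.comp continuous_snd) continuous_const)
    exact hCcl.preimage ((hTcont.comp continuous_snd).sub (continuous_fst.smul continuous_snd))
  have hEhatbd : ∀ p ∈ Ehat, p.1 ≤ B / m₀ := by
    rintro ⟨t, f⟩ ⟨ht0, hfC, hfn, hfm'⟩
    have h1 : 0 ≤ (T f - t • f) ⬝ᵥ e := hfm' e heK
    rw [sub_dotProduct, smul_dotProduct] at h1
    have hfS : f ∈ S := ⟨hfC, hfn⟩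
    have h2 : m₀ ≤ f ⬝ᵥ e := hfm hfS
    have h3 : T f ⬝ᵥ e ≤ B := hTbound f hfS
    have h4 : t * m₀ ≤ t * (f ⬝ᵥ e) := mul_le_mul_of_nonneg_left h2 ht0
    rw [le_div_iff₀ hm₀pos]
    simp only [smul_eq_mul] at h1
    linarith
  have hEhatcpt : IsCompact Ehat := by
    apply IsCompact.of_isClosed_subset
      ((isCompact_Icc (a := (0:ℝ)) (b := B / m₀)).prod (isCompact_closedBall (0 : Fin d → ℝ) 1))
      hEhatcl
    rintro ⟨t, f⟩ hp
    exact ⟨⟨hp.1, hEhatbd _ hp⟩, by simp [Metric.mem_closedBall, dist_eq_norm, hp.2.2.1]⟩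
  set E : Set ℝ := Prod.fst '' Ehat with hE
  have hEcpt : IsCompact E := hEhatcpt.image continuous_fst
  -- membership producing lemma
  have hmemE : ∀ (t : ℝ) (f : Fin d → ℝ), 0 ≤ t → f ∈ C → ‖f‖ = 1 → T f - t • f ∈ C → t ∈ E :=
    fun t f h1 h2 h3 h4 => ⟨(t, f), ⟨h1, h2, h3, h4⟩, rfl⟩
  -- E is nonempty, indeed contains a positive element
  obtain ⟨f₀, hf₀S⟩ := hSne
  have hf₀C := hf₀S.1
  have hf₀0 := hSnz f₀ hf₀S
  have hTf₀int : T f₀ ∈ interior C := T_dual_pos hK hpos hf₀C hf₀0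
  obtain ⟨ε₀, hε₀, hball₀⟩ := Metric.mem_nhds_iff.1 (mem_interior_iff_mem_nhds.1 hTf₀int)
  have hE₀ : ε₀ / 2 ∈ E := by
    apply hmemE _ f₀ (by positivity) hf₀C hf₀S.2
    apply hball₀
    simp only [Metric.mem_ball, dist_eq_norm]
    rw [show T f₀ - (ε₀/2) • f₀ - T f₀ = -((ε₀/2) • f₀) by abel, norm_neg, norm_smul,
      Real.norm_eq_abs, abs_of_pos (by positivity : (0:ℝ) < ε₀/2), hf₀S.2]
    linarith
  have hEne : E.Nonempty := ⟨_, hE₀⟩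
  set lam := sSup E with hlam
  have hlamE : lam ∈ E := hEcpt.sSup_mem hEne
  have hub : ∀ t ∈ E, t ≤ lam := fun t ht => le_csSup hEcpt.bddAbove ht
  have hlampos : 0 < lam := lt_of_lt_of_le (by positivity) (hub _ hE₀)
  obtain ⟨⟨t', fs⟩, hfsmem, hteq⟩ := hlamE
  simp only at hteq
  subst hteq
  obtain ⟨-, hfsC, hfsn, hfsg⟩ := hfsmem
  have hfs0 : fs ≠ 0 := hSnz fs ⟨hfsC, hfsn⟩
  -- Wielandt step : the slack is zero
  set g := T fs - lam • fs with hg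
  have hgzero : g = 0 := by
    by_contra hgne
    have hgC : g ∈ C := hfsg
    set h := T fs with hh
    have hhint : h ∈ interior C := T_dual_pos hK hpos hfsC hfs0
    have hh0 : h ≠ 0 := by
      intro hcontra
      have : h ⬝ᵥ e > 0 := by
        rw [hh, hT, dot_transpose]
        exact dual_pos_on_interior hfsC hfs0 (hpos e heK he0)
      rw [hcontra] at this
      simp at this
    have hTg : T g ∈ interior C := T_dual_pos hK hpos hgC hgne
    have hTgeq : T g = T h - lam • h := by
      rw [hg, hT]
      simp [Matrix.mulVec_sub, Matrix.mulVec_smul]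
      rfl
    rw [hTgeq] at hTg
    obtain ⟨ε₂, hε₂, hball₂⟩ := Metric.mem_nhds_iff.1 (mem_interior_iff_mem_nhds.1 hTg)
    have hnh : 0 < ‖h‖ := norm_pos_iff.2 hh0
    set ε' := ε₂ / (2 * ‖h‖) with hε'
    have hε'pos : 0 < ε' := by positivity
    have hkey : T h - (lam + ε') • h ∈ C := by
      apply hball₂
      simp only [Metric.mem_ball, dist_eq_norm]
      rw [show T h - (lam + ε') • h - (T h - lam • h) = -(ε' • h) by
        rw [add_smul]; abel]
      rw [norm_neg, norm_smul, Real.norm_eq_abs, abs_of_pos hε'pos, hε']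
      rw [div_mul_eq_mul_div, mul_comm]
      rw [div_lt_iff₀ (by positivity : (0:ℝ) < 2 * ‖h‖)]
      nlinarith
    have : lam + ε' ∈ E := by
      apply hmemE _ (‖h‖⁻¹ • h) (by positivity) (smul_mem_dual (interior_subset hhint) (by positivity))
      · rw [norm_smul, Real.norm_eq_abs, abs_inv, abs_of_pos hnh]
        field_simp
      · have heq : T (‖h‖⁻¹ • h) - (lam + ε') • (‖h‖⁻¹ • h)
            = ‖h‖⁻¹ • (T h - (lam + ε') • h) := by
          have h1 : T (‖h‖⁻¹ • h) = ‖h‖⁻¹ • T h := Matrix.mulVec_smul Mᵀ _ h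
          rw [h1, smul_sub, smul_comm]
        rw [heq]
        exact smul_mem_dual hkey (by positivity)
    have := hub _ this
    linarith
  have hfseig : T fs = lam • fs := by
    have h' : T fs - lam • fs = 0 := hgzero
    exact sub_eq_zero.1 h'
  exact ⟨lam, hlampos, fs, by
    have : fs = lam⁻¹ • T fs := by
      rw [hfseig, smul_smul, inv_mul_cancel₀ hlampos.ne', one_smul]
    rw [this]
    exact smul_interior_dual (by positivity) (T_dual_pos hK hpos hfsC hfs0), hfs0, hfseig⟩

end Stmt16

namespace Stmt16

variable {d : ℕ} {K : Set (Fin d → ℝ)} {f : Fin d → ℝ} {M : Matrix (Fin d) (Fin d) ℝ}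

def DSet (K : Set (Fin d → ℝ)) (f x : Fin d → ℝ) : Set ℝ :=
  {r | ∃ v ∈ K, ∃ w ∈ K, x = v - w ∧ r = f ⬝ᵥ (v + w)}

lemma coneNorm_eq (x : Fin d → ℝ) : coneNorm K f x = sInf (DSet K f x) := rfl

lemma DSet_nonneg (hK : IsProperCone K) (hfC : f ∈ dualConeSet K) {x : Fin d → ℝ} :
    ∀ r ∈ DSet K f x, 0 ≤ r := by
  rintro r ⟨v, hv, w, hw, rfl, rfl⟩
  exact hfC _ (add_mem_of_proper hK hv hw)

lemma DSet_bddBelow (hK : IsProperCone K) (hfC : f ∈ dualConeSet K) (x : Fin d → ℝ) :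
    BddBelow (DSet K f x) :=
  ⟨0, fun r hr => DSet_nonneg hK hfC r hr⟩

lemma coneNorm_nonneg (hK : IsProperCone K) (hfC : f ∈ dualConeSet K) (x : Fin d → ℝ) :
    0 ≤ coneNorm K f x :=
  Real.sInf_nonneg (fun r hr => DSet_nonneg hK hfC r hr)

lemma coneNorm_le_mem (hK : IsProperCone K) (hfC : f ∈ dualConeSet K) {x : Fin d → ℝ}
    {r : ℝ} (hr : r ∈ DSet K f x) : coneNorm K f x ≤ r :=
  csInf_le (DSet_bddBelow hK hfC x) hr

lemma DSet_nonempty (hK : IsProperCone K) {e : Fin d → ℝ} (he : e ∈ interior K)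
    (x : Fin d → ℝ) : (DSet K f x).Nonempty := by
  rcases eq_or_ne x 0 with rfl | hx0
  · exact ⟨0, 0, zero_mem_of_proper hK, 0, zero_mem_of_proper hK, by simp, by simp⟩
  obtain ⟨ρ, hρ, hball⟩ := Metric.mem_nhds_iff.1 (mem_interior_iff_mem_nhds.1 he)
  set t := 2 * ‖x‖ / ρ with ht
  have hxpos : 0 < ‖x‖ := norm_pos_iff.2 hx0
  have htpos : 0 < t := by positivity
  have hvK : t • e + x ∈ K := by
    have h1 : e + t⁻¹ • x ∈ K := by
      apply hball
      simp only [Metric.mem_ball, dist_eq_norm]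
      rw [show e + t⁻¹ • x - e = t⁻¹ • x by abel, norm_smul, Real.norm_eq_abs,
        abs_of_pos (inv_pos.2 htpos), ht]
      rw [show (2 * ‖x‖ / ρ)⁻¹ = ρ / (2 * ‖x‖) by rw [inv_div]]
      rw [div_mul_eq_mul_div, div_lt_iff₀ (by positivity)]
      nlinarith
    have := hK.1 _ h1 t htpos.le
    rwa [smul_add, smul_smul, mul_inv_cancel₀ htpos.ne', one_smul] at this
  exact ⟨f ⬝ᵥ (t • e + x + t • e), t • e + x, hvK, t • e,
    hK.1 e (interior_subset he) t htpos.le, by abel, rfl⟩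

lemma coneNorm_upper (hK : IsProperCone K) {e : Fin d → ℝ} (he : e ∈ interior K)
    (hfC : f ∈ dualConeSet K) :
    ∃ Cu : ℝ, 0 ≤ Cu ∧ ∀ x, coneNorm K f x ≤ Cu * ‖x‖ := by
  obtain ⟨ρ, hρ, hball⟩ := Metric.mem_nhds_iff.1 (mem_interior_iff_mem_nhds.1 he)
  have hfe : 0 ≤ f ⬝ᵥ e := hfC e (interior_subset he)
  refine ⟨4 * (f ⬝ᵥ e) / ρ + (d:ℝ) * ‖f‖, by positivity, ?_⟩
  intro x
  rcases eq_or_ne x 0 with rfl | hx0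
  · have h0 : (0:ℝ) ∈ DSet K f (0 : Fin d → ℝ) :=
      ⟨0, zero_mem_of_proper hK, 0, zero_mem_of_proper hK, by simp, by simp⟩
    have := coneNorm_le_mem hK hfC h0
    simpa using this
  set t := 2 * ‖x‖ / ρ with ht
  have hxpos : 0 < ‖x‖ := norm_pos_iff.2 hx0
  have htpos : 0 < t := by positivity
  have hvK : t • e + x ∈ K := by
    have h1 : e + t⁻¹ • x ∈ K := by
      apply hball
      simp only [Metric.mem_ball, dist_eq_norm]
      rw [show e + t⁻¹ • x - e = t⁻¹ • x by abel, norm_smul, Real.norm_eq_abs,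
        abs_of_pos (inv_pos.2 htpos), ht]
      rw [show (2 * ‖x‖ / ρ)⁻¹ = ρ / (2 * ‖x‖) by rw [inv_div]]
      rw [div_mul_eq_mul_div, div_lt_iff₀ (by positivity)]
      nlinarith
    have := hK.1 _ h1 t htpos.le
    rwa [smul_add, smul_smul, mul_inv_cancel₀ htpos.ne', one_smul] at this
  have hmem : f ⬝ᵥ (t • e + x + t • e) ∈ DSet K f x :=
    ⟨t • e + x, hvK, t • e, hK.1 e (interior_subset he) t htpos.le, by abel, rfl⟩
  have h1 := coneNorm_le_mem hK hfC hmem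
  have h2 : f ⬝ᵥ (t • e + x + t • e) = 2 * t * (f ⬝ᵥ e) + f ⬝ᵥ x := by
    rw [show t • e + x + t • e = (2*t) • e + x by rw [two_mul, add_smul]; abel]
    rw [dotProduct_add, dotProduct_smul, smul_eq_mul]
  have h3 : f ⬝ᵥ x ≤ (d:ℝ) * ‖f‖ * ‖x‖ := le_trans (le_abs_self _) (abs_dot_le f x)
  have h4 : 2 * t * (f ⬝ᵥ e) = 4 * (f ⬝ᵥ e) / ρ * ‖x‖ := by
    rw [ht]; field_simp; ring
  calc coneNorm K f x ≤ f ⬝ᵥ (t • e + x + t • e) := h1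
    _ = 2 * t * (f ⬝ᵥ e) + f ⬝ᵥ x := h2
    _ ≤ 4 * (f ⬝ᵥ e) / ρ * ‖x‖ + (d:ℝ) * ‖f‖ * ‖x‖ := by rw [h4]; linarith
    _ = (4 * (f ⬝ᵥ e) / ρ + (d:ℝ) * ‖f‖) * ‖x‖ := by ring

lemma coneNorm_lower (hK : IsProperCone K) (hf : f ∈ interior (dualConeSet K)) :
    ∃ ρ : ℝ, 0 < ρ ∧ ∀ x, ρ * ‖x‖ ≤ coneNorm K f x := by
  obtain ⟨ρ, hρ, hlow⟩ := interior_dual_lower hf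
  have hfC : f ∈ dualConeSet K := interior_subset hf
  obtain ⟨e, he⟩ := hK.2.2.2.1
  refine ⟨ρ, hρ, fun x => ?_⟩
  apply le_csInf (DSet_nonempty hK he x)
  rintro r ⟨v, hv, w, hw, rfl, rfl⟩
  have h1 : ρ * (∑ i, |v i|) ≤ f ⬝ᵥ v := hlow v hv
  have h2 : ρ * (∑ i, |w i|) ≤ f ⬝ᵥ w := hlow w hw
  have h3 : ‖v - w‖ ≤ ∑ i, |v i| + ∑ i, |w i| := by
    calc ‖v - w‖ ≤ ∑ i, |(v - w) i| := norm_le_sum_abs _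
      _ ≤ ∑ i, (|v i| + |w i|) := by
          apply Finset.sum_le_sum
          intro i _
          exact abs_sub (v i) (w i)
      _ = ∑ i, |v i| + ∑ i, |w i| := Finset.sum_add_distrib
  have h4 : f ⬝ᵥ (v + w) = f ⬝ᵥ v + f ⬝ᵥ w := dotProduct_add f v w
  nlinarith

lemma coneNorm_pos (hK : IsProperCone K) (hf : f ∈ interior (dualConeSet K))
    {x : Fin d → ℝ} (hx : x ≠ 0) : 0 < coneNorm K f x := by
  obtain ⟨ρ, hρ, hlow⟩ := coneNorm_lower hK hf
  have := hlow x
  have hxpos : 0 < ‖x‖ := norm_pos_iff.2 hx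
  nlinarith

lemma coneNorm_zero (hK : IsProperCone K) (hfC : f ∈ dualConeSet K) :
    coneNorm K f (0 : Fin d → ℝ) = 0 := by
  have h0 : (0:ℝ) ∈ DSet K f (0 : Fin d → ℝ) :=
    ⟨0, zero_mem_of_proper hK, 0, zero_mem_of_proper hK, by simp, by simp⟩
  exact le_antisymm (coneNorm_le_mem hK hfC h0) (coneNorm_nonneg hK hfC 0)

lemma coneNorm_on_K (hK : IsProperCone K) (hfC : f ∈ dualConeSet K) {x : Fin d → ℝ}
    (hx : x ∈ K) : coneNorm K f x = f ⬝ᵥ x := by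
  apply le_antisymm
  · exact coneNorm_le_mem hK hfC ⟨x, hx, 0, zero_mem_of_proper hK, by simp, by simp⟩
  · rw [coneNorm_eq]
    have hne : (DSet K f x).Nonempty :=
      ⟨f ⬝ᵥ (x + 0), x, hx, 0, zero_mem_of_proper hK, by simp, rfl⟩
    apply le_csInf hne
    rintro r ⟨v, hv, w, hw, hxvw, rfl⟩
    have h1 : 0 ≤ f ⬝ᵥ w := hfC w hw
    have h2 : f ⬝ᵥ x = f ⬝ᵥ v - f ⬝ᵥ w := by
      rw [hxvw, dotProduct_sub]
    rw [dotProduct_add]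
    linarith

lemma coneNorm_add_le (hK : IsProperCone K) {e : Fin d → ℝ} (he : e ∈ interior K)
    (hfC : f ∈ dualConeSet K) (x y : Fin d → ℝ) :
    coneNorm K f (x + y) ≤ coneNorm K f x + coneNorm K f y := by
  have hkey : ∀ r ∈ DSet K f x, ∀ s ∈ DSet K f y, coneNorm K f (x + y) ≤ r + s := by
    rintro r ⟨v, hv, w, hw, rfl, rfl⟩ s ⟨v', hv', w', hw', rfl, rfl⟩
    have hmem : f ⬝ᵥ (v + v' + (w + w')) ∈ DSet K f (v - w + (v' - w')) :=
      ⟨v + v', add_mem_of_proper hK hv hv', w + w', add_mem_of_proper hK hw hw',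
        by abel, rfl⟩
    have := coneNorm_le_mem hK hfC hmem
    calc coneNorm K f (v - w + (v' - w')) ≤ f ⬝ᵥ (v + v' + (w + w')) := this
      _ = f ⬝ᵥ (v + w) + f ⬝ᵥ (v' + w') := by
          rw [← dotProduct_add]
          congr 1
          abel
  have h1 : ∀ r ∈ DSet K f x, coneNorm K f (x + y) - r ≤ coneNorm K f y := by
    intro r hr
    apply le_csInf (DSet_nonempty hK he y)
    intro s hs
    linarith [hkey r hr s hs]
  have h2 : ∀ r ∈ DSet K f x, coneNorm K f (x + y) - coneNorm K f y ≤ r := by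
    intro r hr
    linarith [h1 r hr]
  have := le_csInf (DSet_nonempty hK he x) h2
  rw [coneNorm_eq x] at *
  linarith [this]

lemma coneNorm_smul_le (hK : IsProperCone K) {e : Fin d → ℝ} (he : e ∈ interior K)
    (hfC : f ∈ dualConeSet K) (c : ℝ) (x : Fin d → ℝ) :
    coneNorm K f (c • x) ≤ |c| * coneNorm K f x := by
  rcases lt_trichotomy c 0 with hc | rfl | hc
  · -- c < 0
    have hkey : ∀ r ∈ DSet K f x, coneNorm K f (c • x) ≤ |c| * r := by
      rintro r ⟨v, hv, w, hw, rfl, rfl⟩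
      have hmem : f ⬝ᵥ ((-c) • w + (-c) • v) ∈ DSet K f (c • (v - w)) :=
        ⟨(-c) • w, hK.1 w hw _ (by linarith), (-c) • v, hK.1 v hv _ (by linarith),
          by rw [smul_sub]; module, rfl⟩
      have h1 := coneNorm_le_mem hK hfC hmem
      have h2 : f ⬝ᵥ ((-c) • w + (-c) • v) = (-c) * (f ⬝ᵥ (v + w)) := by
        rw [show (-c) • w + (-c) • v = (-c) • (v + w) by rw [smul_add]; abel,
          dotProduct_smul, smul_eq_mul]
      rw [h2] at h1
      rwa [abs_of_neg hc]
    have hpos : 0 < |c| := abs_pos.2 (ne_of_lt hc)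
    have : ∀ r ∈ DSet K f x, coneNorm K f (c • x) / |c| ≤ r := by
      intro r hr
      rw [div_le_iff₀ hpos, mul_comm]
      exact hkey r hr
    have h3 := le_csInf (DSet_nonempty hK he x) this
    rw [div_le_iff₀ hpos] at h3
    rw [mul_comm] at h3
    exact h3
  · simp [coneNorm_zero hK hfC, coneNorm_nonneg hK hfC x]
  · have hkey : ∀ r ∈ DSet K f x, coneNorm K f (c • x) ≤ |c| * r := by
      rintro r ⟨v, hv, w, hw, rfl, rfl⟩
      have hmem : f ⬝ᵥ (c • v + c • w) ∈ DSet K f (c • (v - w)) :=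
        ⟨c • v, hK.1 v hv _ hc.le, c • w, hK.1 w hw _ hc.le, by rw [smul_sub], rfl⟩
      have h1 := coneNorm_le_mem hK hfC hmem
      have h2 : f ⬝ᵥ (c • v + c • w) = c * (f ⬝ᵥ (v + w)) := by
        rw [← smul_add, dotProduct_smul, smul_eq_mul]
      rw [h2] at h1
      rwa [abs_of_pos hc]
    have hpos : 0 < |c| := abs_pos.2 (ne_of_gt hc)
    have : ∀ r ∈ DSet K f x, coneNorm K f (c • x) / |c| ≤ r := by
      intro r hr
      rw [div_le_iff₀ hpos, mul_comm]
      exact hkey r hr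
    have h3 := le_csInf (DSet_nonempty hK he x) this
    rw [div_le_iff₀ hpos] at h3
    rw [mul_comm] at h3
    exact h3

lemma coneNorm_mulVec_le (hK : IsProperCone K) {e : Fin d → ℝ} (he : e ∈ interior K)
    (hfC : f ∈ dualConeSet K) (hmaps : ∀ x ∈ K, M.mulVec x ∈ K)
    {lam : ℝ} (hlam : 0 < lam) (heig : M.transpose.mulVec f = lam • f) (x : Fin d → ℝ) :
    coneNorm K f (M.mulVec x) ≤ lam * coneNorm K f x := by
  have hkey : ∀ r ∈ DSet K f x, coneNorm K f (M.mulVec x) ≤ lam * r := by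
    rintro r ⟨v, hv, w, hw, rfl, rfl⟩
    have hmem : f ⬝ᵥ (M.mulVec v + M.mulVec w) ∈ DSet K f (M.mulVec (v - w)) :=
      ⟨M.mulVec v, hmaps v hv, M.mulVec w, hmaps w hw, by rw [Matrix.mulVec_sub], rfl⟩
    have h1 := coneNorm_le_mem hK hfC hmem
    have h2 : f ⬝ᵥ (M.mulVec v + M.mulVec w) = lam * (f ⬝ᵥ (v + w)) := by
      rw [← Matrix.mulVec_add, ← dot_transpose, heig, smul_dotProduct, smul_eq_mul]
    rwa [h2] at h1
  have : ∀ r ∈ DSet K f x, coneNorm K f (M.mulVec x) / lam ≤ r := by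
    intro r hr
    rw [div_le_iff₀ hlam, mul_comm]
    exact hkey r hr
  have h3 := le_csInf (DSet_nonempty hK he x) this
  rw [div_le_iff₀ hlam] at h3
  rw [mul_comm] at h3
  exact h3

lemma coneNorm_continuous (hK : IsProperCone K) {e : Fin d → ℝ} (he : e ∈ interior K)
    (hfC : f ∈ dualConeSet K) : Continuous (coneNorm K f) := by
  obtain ⟨Cu, hCu, hupper⟩ := coneNorm_upper hK he hfC
  rw [Metric.continuous_iff]
  intro a ε hε
  refine ⟨ε / (Cu + 1), by positivity, ?_⟩
  intro b hab
  rw [Real.dist_eq]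
  have h1 : coneNorm K f b ≤ coneNorm K f a + coneNorm K f (b - a) := by
    have := coneNorm_add_le hK he hfC a (b - a)
    rwa [show a + (b - a) = b by abel] at this
  have h2 : coneNorm K f a ≤ coneNorm K f b + coneNorm K f (a - b) := by
    have := coneNorm_add_le hK he hfC b (a - b)
    rwa [show b + (a - b) = a by abel] at this
  have h3 : coneNorm K f (b - a) ≤ Cu * ‖b - a‖ := hupper _
  have h4 : coneNorm K f (a - b) ≤ Cu * ‖a - b‖ := hupper _
  have h5 : ‖b - a‖ = dist b a := (dist_eq_norm b a).symm
  have h6 : ‖a - b‖ = dist b a := by rw [dist_eq_norm]; rw [norm_sub_rev]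
  have h7 : Cu * dist b a < ε := by
    calc Cu * dist b a ≤ Cu * (ε / (Cu + 1)) :=
          mul_le_mul_of_nonneg_left hab.le hCu
      _ < ε := by
          rw [mul_div_assoc']
          rw [div_lt_iff₀ (by positivity)]
          nlinarith
  rw [h5] at h3
  rw [h6] at h4
  rw [abs_lt]
  constructor <;> linarith

end Stmt16

namespace Stmt16

variable {d : ℕ} {K : Set (Fin d → ℝ)} {f : Fin d → ℝ} {M : Matrix (Fin d) (Fin d) ℝ}

lemma hasEigen_iff_det (A : Matrix (Fin d) (Fin d) ℂ) (z : ℂ) :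
    Module.End.HasEigenvalue (Matrix.toLin' A) z ↔ (z • (1 : Matrix (Fin d) (Fin d) ℂ) - A).det = 0 := by
  rw [← Matrix.exists_mulVec_eq_zero_iff]
  constructor
  · intro h
    obtain ⟨w, hw⟩ := h.exists_hasEigenvector
    have hw1 := Module.End.mem_eigenspace_iff.1 ((Module.End.hasEigenvector_iff.1 hw).1)
    have hw2 := (Module.End.hasEigenvector_iff.1 hw).2
    refine ⟨w, hw2, ?_⟩
    rw [Matrix.sub_mulVec, Matrix.smul_mulVec, Matrix.one_mulVec]
    rw [Matrix.toLin'_apply] at hw1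
    rw [hw1]
    simp
  · rintro ⟨v, hv, hmul⟩
    apply Module.End.hasEigenvalue_of_hasEigenvector (x := v)
    rw [Module.End.hasEigenvector_iff, Module.End.mem_eigenspace_iff, Matrix.toLin'_apply]
    refine ⟨?_, hv⟩
    rw [Matrix.sub_mulVec, Matrix.smul_mulVec, Matrix.one_mulVec] at hmul
    have := sub_eq_zero.1 hmul
    exact this.symm

/-- the real eigenvalue `lam` of `Mᵀ` is a complex eigenvalue of `M` -/
lemma hasEigen_of_transpose_eig {lam : ℝ} (hf0 : f ≠ 0)
    (heig : M.transpose.mulVec f = lam • f) :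
    Module.End.HasEigenvalue (Matrix.toLin' (M.map Complex.ofReal)) (lam : ℂ) := by
  rw [hasEigen_iff_det]
  have h1 : ((lam : ℂ) • (1 : Matrix (Fin d) (Fin d) ℂ) - M.map Complex.ofReal)
      = (lam • (1 : Matrix (Fin d) (Fin d) ℝ) - M).map Complex.ofReal := by
    ext i j
    simp [Matrix.map_apply, Matrix.one_apply, apply_ite]
  rw [h1]
  have h2 : (lam • (1 : Matrix (Fin d) (Fin d) ℝ) - M).map Complex.ofReal
      = (Complex.ofRealHom : ℝ →+* ℂ).mapMatrix (lam • (1 : Matrix (Fin d) (Fin d) ℝ) - M) := rfl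
  rw [h2, ← RingHom.map_det]
  have h3 : (lam • (1 : Matrix (Fin d) (Fin d) ℝ) - M).det = 0 := by
    rw [← Matrix.det_transpose, Matrix.transpose_sub, Matrix.transpose_smul,
      Matrix.transpose_one]
    rw [← Matrix.exists_mulVec_eq_zero_iff]
    refine ⟨f, hf0, ?_⟩
    rw [Matrix.sub_mulVec, Matrix.smul_mulVec, Matrix.one_mulVec, heig]
    simp
  rw [h3]
  simp

lemma pow_mulVec_contract (hK : IsProperCone K) {e : Fin d → ℝ} (he : e ∈ interior K)
    (hfC : f ∈ dualConeSet K) (hmaps : ∀ x ∈ K, M.mulVec x ∈ K)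
    {lam : ℝ} (hlam : 0 < lam) (heig : M.transpose.mulVec f = lam • f) (x : Fin d → ℝ) :
    ∀ k : ℕ, coneNorm K f ((M ^ k).mulVec x) ≤ lam ^ k * coneNorm K f x := by
  intro k
  induction k with
  | zero => simp [Matrix.one_mulVec]
  | succ n ih =>
    rw [pow_succ', ← Matrix.mulVec_mulVec]
    calc coneNorm K f (M.mulVec ((M ^ n).mulVec x))
        ≤ lam * coneNorm K f ((M ^ n).mulVec x) :=
          coneNorm_mulVec_le hK he hfC hmaps hlam heig _
      _ ≤ lam * (lam ^ n * coneNorm K f x) := mul_le_mul_of_nonneg_left ih hlam.le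
      _ = lam ^ (n+1) * coneNorm K f x := by ring

/-- every complex eigenvalue of `M` has modulus at most `lam` -/
lemma abs_eig_le (hK : IsProperCone K) {e : Fin d → ℝ} (he : e ∈ interior K)
    (hf : f ∈ interior (dualConeSet K)) (hmaps : ∀ x ∈ K, M.mulVec x ∈ K)
    {lam : ℝ} (hlam : 0 < lam) (heig : M.transpose.mulVec f = lam • f) {z : ℂ}
    (hz : Module.End.HasEigenvalue (Matrix.toLin' (M.map Complex.ofReal)) z) :
    ‖z‖ ≤ lam := by
  classical
  have hfC : f ∈ dualConeSet K := interior_subset hf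
  by_contra hgt
  push_neg at hgt
  have habs : 0 < ‖z‖ := lt_trans hlam hgt
  obtain ⟨w, hw⟩ := hz.exists_hasEigenvector
  have hw1 := Module.End.mem_eigenspace_iff.1 ((Module.End.hasEigenvector_iff.1 hw).1)
  have hw0 := (Module.End.hasEigenvector_iff.1 hw).2
  rw [Matrix.toLin'_apply] at hw1
  -- powers
  have hpow : ∀ k : ℕ, ((M ^ k).map Complex.ofReal).mulVec w = z ^ k • w := by
    intro k
    induction k with
    | zero => simp [Matrix.one_mulVec, Matrix.map_one]
    | succ n ih =>
      have hmapmul : ((M ^ (n+1)).map Complex.ofReal)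
          = (M.map Complex.ofReal) * ((M ^ n).map Complex.ofReal) := by
        rw [pow_succ']
        exact Matrix.map_mul (f := Complex.ofRealHom)
      rw [hmapmul, ← Matrix.mulVec_mulVec, ih, Matrix.mulVec_smul, hw1, pow_succ']
      rw [smul_smul, mul_comm]
  set u : Fin d → ℝ := fun i => (w i).re with hu
  set v : Fin d → ℝ := fun i => (w i).im with hv
  have hre : ∀ (k : ℕ) (i : Fin d), ((M ^ k).mulVec u) i = (z ^ k * w i).re ∧
      ((M ^ k).mulVec v) i = (z ^ k * w i).im := by
    intro k i
    have := congrFun (hpow k) i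
    have hL : (((M ^ k).map Complex.ofReal).mulVec w) i = ∑ j, ((M ^ k) i j : ℂ) * w j := rfl
    have hR : (z ^ k • w) i = z ^ k * w i := rfl
    rw [hL, hR] at this
    constructor
    · have : (∑ j, ((M ^ k) i j : ℂ) * w j).re = (z ^ k * w i).re := by rw [this]
      rw [Complex.re_sum] at this
      simp only [Complex.mul_re, Complex.ofReal_re, Complex.ofReal_im, zero_mul, sub_zero] at this
      exact this
    · have : (∑ j, ((M ^ k) i j : ℂ) * w j).im = (z ^ k * w i).im := by rw [this]
      rw [Complex.im_sum] at this
      simp only [Complex.mul_im, Complex.ofReal_re, Complex.ofReal_im, zero_mul, add_zero] at this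
      exact this
  -- at least one of u, v is nonzero
  have huv : u ≠ 0 ∨ v ≠ 0 := by
    by_contra h
    push_neg at h
    apply hw0
    ext i
    have h1 := congrFun h.1 i
    have h2 := congrFun h.2 i
    simp only [hu, hv, Pi.zero_apply] at h1 h2
    rw [Complex.ext_iff]
    exact ⟨h1, h2⟩
  set Nu := coneNorm K f u with hNu
  set Nv := coneNorm K f v with hNv
  have hNupos : 0 ≤ Nu := coneNorm_nonneg hK hfC u
  have hNvpos : 0 ≤ Nv := coneNorm_nonneg hK hfC v
  have hsum : 0 < Nu + Nv := by
    rcases huv with h | h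
    · have := coneNorm_pos hK hf h
      linarith
    · have := coneNorm_pos hK hf h
      linarith
  set q := lam / ‖z‖ with hq
  have hq0 : 0 < q := by positivity
  have hq1 : q < 1 := (div_lt_one habs).2 hgt
  obtain ⟨k, hk⟩ := exists_pow_lt_of_lt_one (by norm_num : (0:ℝ) < 1/2) hq1
  -- analysis at step k
  set t := ‖z‖ ^ k with htdef
  have ht : 0 < t := by positivity
  set a := (z ^ k).re / t with ha
  set b := (z ^ k).im / t with hb
  have habs2 : (z ^ k).re ^ 2 + (z ^ k).im ^ 2 = t ^ 2 := by
    rw [htdef, ← norm_pow]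
    rw [show ‖z ^ k‖ ^ 2 = Complex.normSq (z ^ k) from Complex.sq_norm _]
    rw [Complex.normSq_apply]
    ring
  have hab1 : a ^ 2 + b ^ 2 = 1 := by
    rw [ha, hb, div_pow, div_pow, ← add_div, habs2]
    field_simp
  set ck : Fin d → ℝ := a • u - b • v with hck
  set sk : Fin d → ℝ := b • u + a • v with hsk
  have fact1 : (M ^ k).mulVec u = t • ck := by
    ext i
    rw [(hre k i).1]
    simp only [hck, Pi.smul_apply, Pi.sub_apply, smul_eq_mul, Complex.mul_re, ha, hb]
    field_simp
    rfl
  have fact2 : (M ^ k).mulVec v = t • sk := by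
    ext i
    rw [(hre k i).2]
    simp only [hsk, Pi.smul_apply, Pi.add_apply, smul_eq_mul, Complex.mul_im, ha, hb]
    field_simp
    ring
  have hcontr_u := pow_mulVec_contract hK he hfC hmaps hlam heig u k
  have hcontr_v := pow_mulVec_contract hK he hfC hmaps hlam heig v k
  have hNck : coneNorm K f ck ≤ q ^ k * Nu := by
    have h1 : ck = t⁻¹ • ((M ^ k).mulVec u) := by
      rw [fact1, smul_smul, inv_mul_cancel₀ ht.ne', one_smul]
    rw [h1]
    calc coneNorm K f (t⁻¹ • ((M ^ k).mulVec u))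
        ≤ |t⁻¹| * coneNorm K f ((M ^ k).mulVec u) := coneNorm_smul_le hK he hfC _ _
      _ ≤ t⁻¹ * (lam ^ k * Nu) := by
          rw [abs_of_pos (inv_pos.2 ht)]
          exact mul_le_mul_of_nonneg_left hcontr_u (by positivity)
      _ = q ^ k * Nu := by
          rw [hq, div_pow, htdef]
          field_simp
  have hNsk : coneNorm K f sk ≤ q ^ k * Nv := by
    have h1 : sk = t⁻¹ • ((M ^ k).mulVec v) := by
      rw [fact2, smul_smul, inv_mul_cancel₀ ht.ne', one_smul]
    rw [h1]
    calc coneNorm K f (t⁻¹ • ((M ^ k).mulVec v))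
        ≤ |t⁻¹| * coneNorm K f ((M ^ k).mulVec v) := coneNorm_smul_le hK he hfC _ _
      _ ≤ t⁻¹ * (lam ^ k * Nv) := by
          rw [abs_of_pos (inv_pos.2 ht)]
          exact mul_le_mul_of_nonneg_left hcontr_v (by positivity)
      _ = q ^ k * Nv := by
          rw [hq, div_pow, htdef]
          field_simp
  have hadecomp : u = a • ck + b • sk := by
    ext i
    simp only [hck, hsk, Pi.add_apply, Pi.smul_apply, Pi.sub_apply, smul_eq_mul]
    linear_combination (-u i) * hab1
  have hbdecomp : v = a • sk - b • ck := by
    ext i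
    simp only [hck, hsk, Pi.sub_apply, Pi.smul_apply, Pi.add_apply, smul_eq_mul]
    linear_combination (-v i) * hab1
  have haabs : |a| ≤ 1 := by
    rw [← sq_le_one_iff_abs_le_one]
    nlinarith [sq_nonneg b]
  have hbabs : |b| ≤ 1 := by
    rw [← sq_le_one_iff_abs_le_one]
    nlinarith [sq_nonneg a]
  have hNckn : 0 ≤ coneNorm K f ck := coneNorm_nonneg hK hfC _
  have hNskn : 0 ≤ coneNorm K f sk := coneNorm_nonneg hK hfC _
  have hNu_le : Nu ≤ q ^ k * (Nu + Nv) := by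
    calc Nu = coneNorm K f (a • ck + b • sk) := by rw [← hadecomp]
      _ ≤ coneNorm K f (a • ck) + coneNorm K f (b • sk) := coneNorm_add_le hK he hfC _ _
      _ ≤ |a| * coneNorm K f ck + |b| * coneNorm K f sk := by
          linarith [coneNorm_smul_le hK he hfC a ck, coneNorm_smul_le hK he hfC b sk]
      _ ≤ coneNorm K f ck + coneNorm K f sk := by
          have ha1 : |a| * coneNorm K f ck ≤ coneNorm K f ck :=
            mul_le_of_le_one_left hNckn haabs
          have hb1 : |b| * coneNorm K f sk ≤ coneNorm K f sk :=
            mul_le_of_le_one_left hNskn hbabs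
          linarith
      _ ≤ q ^ k * Nu + q ^ k * Nv := by linarith
      _ = q ^ k * (Nu + Nv) := by ring
  have hNv_le : Nv ≤ q ^ k * (Nu + Nv) := by
    calc Nv = coneNorm K f (a • sk - b • ck) := by rw [← hbdecomp]
      _ = coneNorm K f (a • sk + (-b) • ck) := by
          congr 1
          rw [neg_smul]
          abel
      _ ≤ coneNorm K f (a • sk) + coneNorm K f ((-b) • ck) := coneNorm_add_le hK he hfC _ _
      _ ≤ |a| * coneNorm K f sk + |(-b)| * coneNorm K f ck := by
          linarith [coneNorm_smul_le hK he hfC a sk, coneNorm_smul_le hK he hfC (-b) ck]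
      _ ≤ coneNorm K f sk + coneNorm K f ck := by
          rw [abs_neg]
          have ha1 : |a| * coneNorm K f sk ≤ coneNorm K f sk :=
            mul_le_of_le_one_left hNskn haabs
          have hb1 : |b| * coneNorm K f ck ≤ coneNorm K f ck :=
            mul_le_of_le_one_left hNckn hbabs
          linarith
      _ ≤ q ^ k * Nv + q ^ k * Nu := by linarith
      _ = q ^ k * (Nu + Nv) := by ring
  have hfin : Nu + Nv ≤ 2 * q ^ k * (Nu + Nv) := by linarith
  have h2q : 2 * q ^ k < 1 := by linarith
  have := mul_lt_mul_of_pos_right h2q hsum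
  linarith

/-- the Perron eigenvalue equals the spectral radius -/
lemma specRad_eq (hK : IsProperCone K) {e : Fin d → ℝ} (he : e ∈ interior K)
    (hf : f ∈ interior (dualConeSet K)) (hf0 : f ≠ 0) (hmaps : ∀ x ∈ K, M.mulVec x ∈ K)
    {lam : ℝ} (hlam : 0 < lam) (heig : M.transpose.mulVec f = lam • f) :
    specRad M = lam := by
  have hmem : lam ∈ {r | ∃ z : ℂ, Module.End.HasEigenvalue
      (Matrix.toLin' (M.map Complex.ofReal)) z ∧ r = ‖z‖} :=
    ⟨(lam : ℂ), hasEigen_of_transpose_eig hf0 heig, by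
      rw [Complex.norm_real, Real.norm_eq_abs, abs_of_pos hlam]⟩
  have hbdd : ∀ r ∈ {r | ∃ z : ℂ, Module.End.HasEigenvalue
      (Matrix.toLin' (M.map Complex.ofReal)) z ∧ r = ‖z‖}, r ≤ lam := by
    rintro r ⟨z, hz, rfl⟩
    exact abs_eig_le hK he hf hmaps hlam heig hz
  exact le_antisymm (csSup_le ⟨lam, hmem⟩ hbdd) (le_csSup ⟨lam, hbdd⟩ hmem)

end Stmt16

namespace Stmt16

instance {d : ℕ} : BorelSpace (Matrix (Fin d) (Fin d) ℝ) :=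
  inferInstanceAs (BorelSpace (Fin d → Fin d → ℝ))

variable {d : ℕ} {K : Set (Fin d → ℝ)} {f : Fin d → ℝ}
  {μ : Measure (Matrix (Fin d) (Fin d) ℝ)}

lemma ae_of_support {P : Matrix (Fin d) (Fin d) ℝ → Prop} (hfull : μ (msupport μ)ᶜ = 0)
    (h : ∀ A ∈ msupport μ, P A) : ∀ᵐ A ∂μ, P A := by
  rw [MeasureTheory.ae_iff]
  apply MeasureTheory.measure_mono_null _ hfull
  intro A hA
  simp only [Set.mem_setOf_eq] at hA
  intro hsupp
  exact hA (h A hsupp)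

lemma cont_matrix_apply {d : ℕ} (i j : Fin d) :
    Continuous fun X : Matrix (Fin d) (Fin d) ℝ => X i j := by
  show Continuous fun X : Fin d → Fin d → ℝ => X i j
  exact (continuous_apply j).comp (continuous_apply i)

lemma cont_mulVec_matrix (x : Fin d → ℝ) :
    Continuous fun X : Matrix (Fin d) (Fin d) ℝ => X.mulVec x := by
  apply continuous_pi
  intro i
  unfold Matrix.mulVec dotProduct
  exact continuous_finset_sum _ fun j _ => (cont_matrix_apply i j).mul continuous_const

lemma integrable_of_cont [IsProbabilityMeasure μ] (hsupp : IsCompact (msupport μ))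
    (hfull : μ (msupport μ)ᶜ = 0) {g : Matrix (Fin d) (Fin d) ℝ → ℝ} (hg : Continuous g) :
    Integrable g μ := by
  obtain ⟨Cb, hCb⟩ := hsupp.exists_bound_of_continuousOn hg.continuousOn
  exact Integrable.mono' (integrable_const Cb) hg.aestronglyMeasurable
    (ae_of_support hfull fun A hA => hCb A hA)

lemma integral_dot [IsProbabilityMeasure μ] (hsupp : IsCompact (msupport μ))
    (hfull : μ (msupport μ)ᶜ = 0) (f v : Fin d → ℝ) :
    ∫ X, f ⬝ᵥ (X.mulVec v) ∂μ = f ⬝ᵥ ((meanMat μ).mulVec v) := by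
  have hexp : ∀ X : Matrix (Fin d) (Fin d) ℝ,
      f ⬝ᵥ (X.mulVec v) = ∑ i, ∑ j, f i * X i j * v j := by
    intro X
    unfold dotProduct Matrix.mulVec dotProduct
    rw [Finset.sum_congr rfl]
    intro i _
    rw [Finset.mul_sum]
    congr 1
    ext j
    ring
  have hint : ∀ (i j : Fin d), Integrable (fun X : Matrix (Fin d) (Fin d) ℝ
      => f i * X i j * v j) μ := by
    intro i j
    apply integrable_of_cont hsupp hfull
    exact (continuous_const.mul (cont_matrix_apply i j)).mul continuous_const
  calc ∫ X, f ⬝ᵥ (X.mulVec v) ∂μ = ∫ X, ∑ i, ∑ j, f i * X i j * v j ∂μ := by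
        congr 1
        ext X
        exact hexp X
    _ = ∑ i, ∫ X, ∑ j, f i * X i j * v j ∂μ := by
        apply integral_finset_sum
        intro i _
        apply integrable_finset_sum
        intro j _
        exact hint i j
    _ = ∑ i, ∑ j, ∫ X, f i * X i j * v j ∂μ := by
        congr 1
        ext i
        exact integral_finset_sum _ fun j _ => hint i j
    _ = ∑ i, ∑ j, f i * (meanMat μ) i j * v j := by
        congr 1
        ext i
        congr 1
        ext j
        rw [show (fun X : Matrix (Fin d) (Fin d) ℝ => f i * X i j * v j)
          = fun X => (f i * v j) * X i j from funext fun X => by ring]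
        rw [integral_const_mul]
        show f i * v j * ∫ X, X i j ∂μ = f i * (meanMat μ) i j * v j
        have : (meanMat μ) i j = ∫ X, X i j ∂μ := rfl
        rw [this]
        ring
    _ = f ⬝ᵥ ((meanMat μ).mulVec v) := by
        unfold dotProduct Matrix.mulVec dotProduct
        rw [Finset.sum_congr rfl]
        intro i _
        rw [Finset.mul_sum]
        congr 1
        ext j
        ring

end Stmt16

namespace Stmt16

variable {d : ℕ} {K : Set (Fin d → ℝ)} {f : Fin d → ℝ}
  {μ : Measure (Matrix (Fin d) (Fin d) ℝ)}

lemma lyapunov [IsProbabilityMeasure μ] (hK : IsProperCone K) {e : Fin d → ℝ}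
    (he : e ∈ interior K) (hf : f ∈ interior (dualConeSet K))
    (hsupp : IsCompact (msupport μ)) (hfull : μ (msupport μ)ᶜ = 0)
    (hinv : ∀ A ∈ msupport μ, LeavesInvariant A K)
    {lam : ℝ} (hlam : 0 < lam) (heig : (meanMat μ).transpose.mulVec f = lam • f)
    (x : Fin d → ℝ) :
    (∫ X, coneNorm K f (X.mulVec x) ∂μ) ≤ lam * coneNorm K f x := by
  have hfC : f ∈ dualConeSet K := interior_subset hf
  set I := ∫ X, coneNorm K f (X.mulVec x) ∂μ with hI
  have hkey : ∀ r ∈ DSet K f x, I ≤ lam * r := by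
    rintro r ⟨v, hv, w, hw, rfl, rfl⟩
    have hcont1 : Continuous fun X : Matrix (Fin d) (Fin d) ℝ =>
        coneNorm K f (X.mulVec (v - w)) :=
      (coneNorm_continuous hK he hfC).comp (cont_mulVec_matrix (v - w))
    have hcont2 : Continuous fun X : Matrix (Fin d) (Fin d) ℝ =>
        f ⬝ᵥ (X.mulVec v + X.mulVec w) := by
      apply (cont_dot_right f).comp
      exact (cont_mulVec_matrix v).add (cont_mulVec_matrix w)
    have hint1 := integrable_of_cont hsupp hfull hcont1
    have hint2 := integrable_of_cont hsupp hfull hcont2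
    have hae : ∀ᵐ X ∂μ, coneNorm K f (X.mulVec (v - w)) ≤ f ⬝ᵥ (X.mulVec v + X.mulVec w) := by
      apply ae_of_support hfull
      intro A hA
      apply coneNorm_le_mem hK hfC
      exact ⟨A.mulVec v, hinv A hA v hv, A.mulVec w, hinv A hA w hw,
        by rw [Matrix.mulVec_sub], rfl⟩
    have h1 : I ≤ ∫ X, f ⬝ᵥ (X.mulVec v + X.mulVec w) ∂μ :=
      integral_mono_ae hint1 hint2 hae
    have hint3 : Integrable (fun X : Matrix (Fin d) (Fin d) ℝ => f ⬝ᵥ (X.mulVec v)) μ :=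
      integrable_of_cont hsupp hfull ((cont_dot_right f).comp (cont_mulVec_matrix v))
    have hint4 : Integrable (fun X : Matrix (Fin d) (Fin d) ℝ => f ⬝ᵥ (X.mulVec w)) μ :=
      integrable_of_cont hsupp hfull ((cont_dot_right f).comp (cont_mulVec_matrix w))
    have h2 : ∫ X, f ⬝ᵥ (X.mulVec v + X.mulVec w) ∂μ
        = (∫ X, f ⬝ᵥ (X.mulVec v) ∂μ) + ∫ X, f ⬝ᵥ (X.mulVec w) ∂μ := by
      rw [← integral_add hint3 hint4]
      congr 1
      ext X
      rw [dotProduct_add]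
    have h3 : (∫ X, f ⬝ᵥ (X.mulVec v) ∂μ) + (∫ X, f ⬝ᵥ (X.mulVec w) ∂μ)
        = f ⬝ᵥ ((meanMat μ).mulVec v) + f ⬝ᵥ ((meanMat μ).mulVec w) := by
      rw [integral_dot hsupp hfull, integral_dot hsupp hfull]
    have h4 : f ⬝ᵥ ((meanMat μ).mulVec v) + f ⬝ᵥ ((meanMat μ).mulVec w)
        = lam * (f ⬝ᵥ (v + w)) := by
      rw [← dotProduct_add, ← Matrix.mulVec_add, ← dot_transpose, heig,
        smul_dotProduct, smul_eq_mul]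
    linarith
  have hdiv : ∀ r ∈ DSet K f x, I / lam ≤ r := by
    intro r hr
    rw [div_le_iff₀ hlam, mul_comm]
    exact hkey r hr
  have h5 := le_csInf (DSet_nonempty hK he x) hdiv
  rw [div_le_iff₀ hlam] at h5
  rw [mul_comm] at h5
  exact h5

lemma opNorm_eq {M : Matrix (Fin d) (Fin d) ℝ} (hK : IsProperCone K) (hd : 0 < d)
    {e : Fin d → ℝ} (he : e ∈ interior K) (hf : f ∈ interior (dualConeSet K)) (hf0 : f ≠ 0)
    (hmaps : ∀ x ∈ K, M.mulVec x ∈ K) {lam : ℝ} (hlam : 0 < lam)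
    (heig : M.transpose.mulVec f = lam • f) :
    opNorm (coneNorm K f) M = lam := by
  have hfC : f ∈ dualConeSet K := interior_subset hf
  have he0 : e ≠ 0 := interior_ne_zero hK hd he
  have heK : e ∈ K := interior_subset he
  have hfe : 0 < f ⬝ᵥ e := dual_pos_on_interior hfC hf0 he
  have hNe : coneNorm K f e = f ⬝ᵥ e := coneNorm_on_K hK hfC heK
  have hNMe : coneNorm K f (M.mulVec e) = lam * (f ⬝ᵥ e) := by
    rw [coneNorm_on_K hK hfC (hmaps e heK), ← dot_transpose, heig,
      smul_dotProduct, smul_eq_mul]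
  have hmem : lam ∈ {r | ∃ x : Fin d → ℝ, x ≠ 0 ∧ r = coneNorm K f (M.mulVec x) / coneNorm K f x} := by
    refine ⟨e, he0, ?_⟩
    rw [hNMe, hNe, mul_div_assoc, div_self (ne_of_gt hfe), mul_one]
  have hbdd : ∀ r ∈ {r | ∃ x : Fin d → ℝ, x ≠ 0 ∧
      r = coneNorm K f (M.mulVec x) / coneNorm K f x}, r ≤ lam := by
    rintro r ⟨x, hx0, rfl⟩
    have hNx : 0 < coneNorm K f x := coneNorm_pos hK hf hx0
    rw [div_le_iff₀ hNx]
    exact coneNorm_mulVec_le hK he hfC hmaps hlam heig x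
  exact le_antisymm (csSup_le ⟨lam, hmem⟩ hbdd) (le_csSup ⟨lam, hbdd⟩ hmem)

end Stmt16

/-- If `supp μ` leaves a proper cone `K` invariant, `E[A]` is `K`-positive and
`ρ(E[A]) < 1`, then the cone linear absolute norm `‖·‖_f` induced by the left Perron eigenvector
`f ∈ int K*` of `E[A]` is a degree-1 homogeneous Lyapunov function:
`E[‖Ax‖_f] ≤ ρ(E[A]) ‖x‖_f` for all `x`. -/
theorem stmt_16 {d : ℕ} (μ : Measure (Matrix (Fin d) (Fin d) ℝ)) [IsProbabilityMeasure μ]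
    (hsupp : IsCompact (msupport μ)) (hfull : μ (msupport μ)ᶜ = 0)
    (K : Set (Fin d → ℝ)) (hK : IsProperCone K)
    (hinv : ∀ A ∈ msupport μ, LeavesInvariant A K)
    (hpos : IsKPos (meanMat μ) K) (hρ : specRad (meanMat μ) < 1) :
    ∃ f ∈ interior (dualConeSet K),
      (meanMat μ).transpose.mulVec f = specRad (meanMat μ) • f ∧
      opNorm (coneNorm K f) (meanMat μ) = specRad (meanMat μ) ∧
      ∀ x : Fin d → ℝ,
        (∫ X, coneNorm K f (X.mulVec x) ∂μ) ≤ specRad (meanMat μ) * coneNorm K f x := by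
  rcases Nat.eq_zero_or_pos d with hd | hd
  · -- degenerate case d = 0
    subst hd
    have hvec0 : ∀ y : Fin 0 → ℝ, y = 0 := fun y => funext fun i => i.elim0
    have hdual : dualConeSet K = Set.univ := by
      ext g
      simp only [dualConeSet, Set.mem_setOf_eq, Set.mem_univ, iff_true]
      intro x hx
      simp [dotProduct]
    have hcone0 : ∀ y : Fin 0 → ℝ, coneNorm K (0 : Fin 0 → ℝ) y = 0 := by
      intro y
      have : {r | ∃ v ∈ K, ∃ w ∈ K, y = v - w ∧ r = (0 : Fin 0 → ℝ) ⬝ᵥ (v + w)} = {0} := by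
        ext r
        constructor
        · rintro ⟨v, hv, w, hw, rfl, rfl⟩
          simp [zero_dotProduct]
        · rintro rfl
          exact ⟨0, Stmt16.zero_mem_of_proper hK, 0, Stmt16.zero_mem_of_proper hK,
            by rw [hvec0 y, sub_zero], by simp⟩
      show sInf _ = 0
      rw [this]
      exact csInf_singleton 0
    have hspec : specRad (meanMat μ) = 0 := by
      have hempty : {r | ∃ z : ℂ, Module.End.HasEigenvalue
          (Matrix.toLin' ((meanMat μ).map Complex.ofReal)) z ∧ r = ‖z‖} = ∅ := by
        ext r
        simp only [Set.mem_setOf_eq, Set.mem_empty_iff_false, iff_false, not_exists]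
        rintro z ⟨hz, -⟩
        obtain ⟨w, hw⟩ := hz.exists_hasEigenvector
        exact (Module.End.hasEigenvector_iff.1 hw).2 (funext fun i => i.elim0)
      show sSup _ = 0
      rw [hempty]
      exact Real.sSup_empty
    refine ⟨0, by rw [hdual, interior_univ]; trivial, ?_, ?_, ?_⟩
    · exact funext fun i => i.elim0
    · have hop : opNorm (coneNorm K (0 : Fin 0 → ℝ)) (meanMat μ) = 0 := by
        have hempty : {r | ∃ x : Fin 0 → ℝ, x ≠ 0 ∧
            r = coneNorm K 0 ((meanMat μ).mulVec x) / coneNorm K 0 x} = ∅ := by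
          ext r
          simp only [Set.mem_setOf_eq, Set.mem_empty_iff_false, iff_false, not_exists]
          rintro x ⟨hx, -⟩
          exact hx (hvec0 x)
        show sSup _ = 0
        rw [hempty]
        exact Real.sSup_empty
      rw [hop, hspec]
    · intro x
      rw [hspec, hcone0, mul_zero]
      have : (fun X : Matrix (Fin 0) (Fin 0) ℝ => coneNorm K (0 : Fin 0 → ℝ) (X.mulVec x))
          = fun _ => 0 := funext fun X => hcone0 _
      rw [this, integral_zero]
  · -- main case
    obtain ⟨e, he⟩ := hK.2.2.2.1
    obtain ⟨lam, hlam, f, hfint, hf0, heig⟩ := Stmt16.perron hK hd hpos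
    have hmaps := Stmt16.maps_K hK hpos
    have hspec : specRad (meanMat μ) = lam :=
      Stmt16.specRad_eq hK he hfint hf0 hmaps hlam heig
    refine ⟨f, hfint, ?_, ?_, ?_⟩
    · rw [hspec]; exact heig
    · rw [hspec]; exact Stmt16.opNorm_eq hK hd he hfint hf0 hmaps hlam heig
    · intro x
      rw [hspec]
      exact Stmt16.lyapunov hK he hfint hsupp hfull hinv hlam heig x
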